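/- Let (h_i)_{i=1}^{n+1} be a positive non-increasing sequence and (T_i)_{i=1}^n, c, T_max > 0 such that h_i − h_{i+1} ≥ (c T_i / T_max) h_i for all i ∈ [n], with c T_i ≤ T_max. Then Σ_{i=1}^n T_i ≤ (T_max / c) · ln(h₁ / h_{n+1}). -/

import Mathlib

lemma ratio_le_log {a b : ℝ} (hb : 0 < b) (hab : b ≤ a) :
    (a - b) / a ≤ Real.log (a / b) := by
  have ha : 0 < a := lt_of_lt_of_le hb hab
  have h1 : Real.log (b / a) ≤ b / a - 1 :=
    Real.log_le_sub_one_of_pos (div_pos hb ha)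
  have h2 : Real.log (a / b) = - Real.log (b / a) := by
    rw [← Real.log_inv, inv_div]
  rw [h2]
  have : (a - b) / a = -(b / a - 1) := by field_simp; ring
  rw [this]
  linarith

lemma telescope_icc (f : ℕ → ℝ) : ∀ n : ℕ,
    ∑ i ∈ Finset.Icc 1 n, (f i - f (i + 1)) = f 1 - f (n + 1) := by
  intro n
  induction n with
  | zero => simp
  | succ m ih => rw [Finset.sum_Icc_succ_top (by omega : 1 ≤ m + 1), ih]; ring

theorem time_bound_successful_steps (n : ℕ) (h T : ℕ → ℝ) (c Tmax : ℝ)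
    (hc : 0 < c) (hTmax : 0 < Tmax)
    (hpos : ∀ i ∈ Finset.Icc 1 (n + 1), 0 < h i)
    (hmono : ∀ i ∈ Finset.Icc 1 n, h (i + 1) ≤ h i)
    (hTpos : ∀ i ∈ Finset.Icc 1 n, 0 < T i)
    (hTle : ∀ i ∈ Finset.Icc 1 n, c * T i ≤ Tmax)
    (hdec : ∀ i ∈ Finset.Icc 1 n, h i - h (i + 1) ≥ (c * T i / Tmax) * h i) :
    ∑ i ∈ Finset.Icc 1 n, T i ≤ (Tmax / c) * Real.log (h 1 / h (n + 1)) := by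
  -- Step 1: T i ≤ (Tmax/c) * (log (h i) - log (h (i+1))) for i ∈ Icc 1 n
  have key : ∀ i ∈ Finset.Icc 1 n,
      T i ≤ (Tmax / c) * (Real.log (h i) - Real.log (h (i + 1))) := by
    intro i hi
    obtain ⟨hi1, hin⟩ := Finset.mem_Icc.mp hi
    have hhi : 0 < h i := hpos i (Finset.mem_Icc.mpr ⟨hi1, by omega⟩)
    have hhi1 : 0 < h (i + 1) := hpos (i + 1) (Finset.mem_Icc.mpr ⟨by omega, by omega⟩)
    have hm := hmono i hi
    have hd := hdec i hi
    have hr : c * T i / Tmax ≤ (h i - h (i + 1)) / h i := by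
      rw [div_le_div_iff₀ hTmax hhi]
      have hd2 := mul_le_mul_of_nonneg_right hd hTmax.le
      have he : c * T i / Tmax * h i * Tmax = c * T i * h i := by
        field_simp
      linarith [he ▸ hd2]
    have hl : (h i - h (i + 1)) / h i ≤ Real.log (h i / h (i + 1)) :=
      ratio_le_log hhi1 hm
    have hlog : Real.log (h i / h (i + 1)) = Real.log (h i) - Real.log (h (i + 1)) :=
      Real.log_div hhi.ne' hhi1.ne'
    have h3 : c * T i / Tmax ≤ Real.log (h i) - Real.log (h (i + 1)) := by
      rw [← hlog]; exact le_trans hr hl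
    have := mul_le_mul_of_nonneg_left h3 (le_of_lt (div_pos hTmax hc))
    calc T i = (Tmax / c) * (c * T i / Tmax) := by field_simp
      _ ≤ (Tmax / c) * (Real.log (h i) - Real.log (h (i + 1))) := this
  calc ∑ i ∈ Finset.Icc 1 n, T i
      ≤ ∑ i ∈ Finset.Icc 1 n, (Tmax / c) * (Real.log (h i) - Real.log (h (i + 1))) :=
        Finset.sum_le_sum key
    _ = (Tmax / c) * ∑ i ∈ Finset.Icc 1 n, (Real.log (h i) - Real.log (h (i + 1))) := by
        rw [Finset.mul_sum]
    _ = (Tmax / c) * (Real.log (h 1) - Real.log (h (n + 1))) := by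
        rw [telescope_icc (fun j => Real.log (h j)) n]
    _ = (Tmax / c) * Real.log (h 1 / h (n + 1)) := by
        rw [Real.log_div (hpos 1 (Finset.mem_Icc.mpr ⟨le_refl 1, by omega⟩)).ne'
          (hpos (n + 1) (Finset.mem_Icc.mpr ⟨by omega, le_refl _⟩)).ne']
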